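/- Let A be an m×n real matrix partitioned as A = [[A₁₁, A₁₂],[A₂₁, A₂₂]] with A₁₁ a nonsingular k×k block, k < min(m,n), having local ρ-maximum volume in A for some ρ ≥ 1. Then σ_{k+1}(A) ≤ ‖A/A₁₁‖₂ ≤ ρ(k+1)√((m−k)(n−k))·σ_{k+1}(A), where ‖·‖₂ denotes the spectral norm (largest singular value). -/

import Mathlib

open Matrix

/-- The maximum absolute entry norm `‖·‖_C` of a matrix. -/
noncomputable def cnorm {m n : Type*} [Fintype m] [Fintype n]
    (M : Matrix m n ℝ) : ℝ := ⨆ i, ⨆ j, |M i j|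

/-- The `k`-th largest value (1-indexed) of a finite family of reals. -/
noncomputable def kthLargest {ι : Type*} [Fintype ι] (f : ι → ℝ) (k : ℕ) : ℝ :=
  ((Finset.univ.val.map f).sort (· ≤ ·)).getD (Fintype.card ι - k) 0

/-- The `k`-th largest singular value (1-indexed) of a real matrix,
i.e. the square root of the `k`-th largest eigenvalue of `Aᴴ * A`. -/
noncomputable def singularValue {m n : Type*} [Fintype m] [Fintype n] [DecidableEq n]
    (A : Matrix m n ℝ) (k : ℕ) : ℝ :=
  Real.sqrt (kthLargest (Matrix.isHermitian_conjTranspose_mul_self A).eigenvalues k)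

lemma kthLargest_spec {ι : Type*} [Fintype ι] (f : ι → ℝ) :
    ∃ e : Fin (Fintype.card ι) ≃ ι, Monotone (f ∘ e) ∧
      ∀ j, ∀ _h1 : 1 ≤ j, ∀ h2 : j ≤ Fintype.card ι,
        kthLargest f j = f (e ⟨Fintype.card ι - j, by omega⟩) := by
  classical
  set n := Fintype.card ι with hn
  let ε : Fin n ≃ ι := (Fintype.equivFin ι).symm
  let g : Fin n → ℝ := f ∘ ε
  let σ := Tuple.sort g
  have hmono : Monotone (g ∘ σ) := Tuple.monotone_sort g
  have hcomp : f ∘ (σ.trans ε) = g ∘ σ := rfl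
  refine ⟨σ.trans ε, by rw [hcomp]; exact hmono, ?_⟩
  have hms : (↑(List.ofFn (g ∘ σ)) : Multiset ℝ) = Multiset.map f Finset.univ.val := by
    have h1 : (↑(List.ofFn (g ∘ σ)) : Multiset ℝ)
        = Multiset.map (g ∘ σ) (Finset.univ.val : Multiset (Fin n)) := by
      rw [List.ofFn_eq_map]; rfl
    have h2 : Multiset.map (⇑σ) (Finset.univ.val : Multiset (Fin n)) = Finset.univ.val := by
      have := congrArg Finset.val (Finset.map_univ_equiv σ)
      simpa [Finset.map_val] using this
    have h4 : Multiset.map (⇑ε) (Finset.univ.val : Multiset (Fin n)) = Finset.univ.val := by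
      have := congrArg Finset.val (Finset.map_univ_equiv ε)
      simpa [Finset.map_val] using this
    rw [h1, ← Multiset.map_map, h2, show g = f ∘ ε from rfl, ← Multiset.map_map, h4]
  have hL : ((Finset.univ.val.map f).sort (· ≤ ·)) = List.ofFn (g ∘ σ) := by
    refine (fun h1 h2 h3 => List.Perm.eq_of_pairwise' (r := ((· ≤ ·) : ℝ → ℝ → Prop)) h2 h3 h1) ?_ ?_ ?_
    · rw [← Multiset.coe_eq_coe, Multiset.sort_eq, hms]
    · exact Multiset.pairwise_sort _ _
    · exact List.pairwise_ofFn.2 fun i j h => hmono h.le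
  intro j h1 h2
  have hlt : n - j < n := by omega
  rw [kthLargest, hL, List.getD_eq_getElem?_getD,
    List.getElem?_eq_getElem (by rw [List.length_ofFn]; exact hlt)]
  simp [List.getElem_ofFn]
  rfl



lemma exists_ne_zero_mulVec_eq_zero {τ κ : Type*} [Fintype τ] [Fintype κ]
    (M : Matrix τ κ ℝ) (h : M.rank < Fintype.card κ) : ∃ v, v ≠ 0 ∧ M *ᵥ v = 0 := by
  classical
  have h1 : Module.finrank ℝ (LinearMap.range M.mulVecLin)
      + Module.finrank ℝ (LinearMap.ker M.mulVecLin) = Fintype.card κ := by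
    simpa [Module.finrank_pi] using M.mulVecLin.finrank_range_add_finrank_ker
  have hr : M.rank = Module.finrank ℝ (LinearMap.range M.mulVecLin) := rfl
  have hker : LinearMap.ker M.mulVecLin ≠ ⊥ := by
    intro hbot
    rw [hbot] at h1
    simp [finrank_bot] at h1
    omega
  obtain ⟨v, hv, hv0⟩ := (Submodule.ne_bot_iff _).mp hker
  exact ⟨v, hv0, by simpa [Matrix.mulVecLin_apply] using hv⟩

lemma unitary_facts {ι : Type*} [Fintype ι] [DecidableEq ι]
    {H : Matrix ι ι ℝ} (hH : H.IsHermitian) :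
    ∃ U W : Matrix ι ι ℝ, W * U = 1 ∧ U * W = 1 ∧
      (∀ a b : ι → ℝ, (U *ᵥ a) ⬝ᵥ (U *ᵥ b) = a ⬝ᵥ b) ∧
      (∀ y : ι → ℝ, (U *ᵥ y) ⬝ᵥ (H *ᵥ (U *ᵥ y)) = ∑ i, hH.eigenvalues i * (y i)^2) := by
  classical
  set U : Matrix ι ι ℝ := (hH.eigenvectorUnitary : Matrix ι ι ℝ) with hU
  have hmem := hH.eigenvectorUnitary.2
  have hWU : star U * U = 1 := (Matrix.mem_unitaryGroup_iff').mp hmem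
  have hUW : U * star U = 1 := (Matrix.mem_unitaryGroup_iff).mp hmem
  have hstar : star U = Uᵀ := by
    rw [Matrix.star_eq_conjTranspose, Matrix.conjTranspose_eq_transpose_of_trivial]
  have hdot : ∀ a b : ι → ℝ, (U *ᵥ a) ⬝ᵥ (U *ᵥ b) = a ⬝ᵥ b := by
    intro a b
    rw [dotProduct_mulVec, ← mulVec_transpose, ← hstar, mulVec_mulVec, hWU, one_mulVec]
  refine ⟨U, star U, hWU, hUW, hdot, ?_⟩
  intro y
  have hD : H *ᵥ (U *ᵥ y) = U *ᵥ ((Matrix.diagonal hH.eigenvalues) *ᵥ y) := by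
    conv_lhs => rw [hH.spectral_theorem, Unitary.conjStarAlgAut_apply]
    rw [mulVec_mulVec, mul_assoc, mul_assoc, hWU, mul_one, ← mulVec_mulVec]
    simp [RCLike.ofReal_real_eq_id]
    rfl
  rw [hD, hdot]
  simp only [dotProduct, mulVec_diagonal]
  exact Finset.sum_congr rfl fun i _ => by ring

lemma cf_up {ι τ : Type*} [Fintype ι] [DecidableEq ι] [Fintype τ] {H : Matrix ι ι ℝ}
    (hH : H.IsHermitian) (k : ℕ) (hk : k + 1 ≤ Fintype.card ι)
    (X : Matrix τ ι ℝ) (hX : X.rank ≤ k) :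
    ∃ x : ι → ℝ, x ≠ 0 ∧ X *ᵥ x = 0 ∧
      kthLargest hH.eigenvalues (k + 1) * (x ⬝ᵥ x) ≤ x ⬝ᵥ (H *ᵥ x) := by
  classical
  obtain ⟨U, W, hWU, hUW, hdot, hq⟩ := unitary_facts hH
  obtain ⟨e, hmono, hspec⟩ := kthLargest_spec hH.eigenvalues
  let ι₂ : Fin (k+1) → Fin (Fintype.card ι) :=
    fun j => ⟨Fintype.card ι - (k+1) + j.val, by omega⟩
  have hι₂ : Function.Injective ι₂ := by
    intro a b hab
    have := congrArg Fin.val hab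
    simp only [ι₂] at this
    exact Fin.ext (by omega)
  let C : Matrix ι (Fin (k+1)) ℝ := Matrix.of fun a j => if a = e (ι₂ j) then 1 else 0
  have hrank : ((X * U) * C).rank < Fintype.card (Fin (k+1)) := by
    have h1 : ((X * U) * C).rank ≤ (X * U).rank := rank_mul_le_left _ _
    have h2 : (X * U).rank ≤ X.rank := rank_mul_le_left _ _
    simp only [Fintype.card_fin]
    omega
  obtain ⟨v, hv0, hMv⟩ := exists_ne_zero_mulVec_eq_zero _ hrank
  have hCv : ∀ j, (C *ᵥ v) (e (ι₂ j)) = v j := by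
    intro j
    simp only [mulVec, dotProduct, C, Matrix.of_apply]
    rw [Finset.sum_eq_single j]
    · simp
    · intro b _ hb
      rw [if_neg fun h => hb (hι₂ (e.injective h)).symm]
      ring
    · simp
  have hsupp : ∀ a, (C *ᵥ v) a ≠ 0 → ∃ j, a = e (ι₂ j) := by
    intro a ha
    by_contra hno
    push_neg at hno
    apply ha
    simp only [mulVec, dotProduct, C, Matrix.of_apply]
    apply Finset.sum_eq_zero
    intro j _
    rw [if_neg (hno j)]
    ring
  have hy0 : (C *ᵥ v) ≠ 0 := by
    intro h
    apply hv0
    funext j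
    have := hCv j
    rw [h] at this
    simpa using this.symm
  refine ⟨U *ᵥ (C *ᵥ v), ?_, ?_, ?_⟩
  · intro h
    apply hy0
    have : W *ᵥ (U *ᵥ (C *ᵥ v)) = C *ᵥ v := by rw [mulVec_mulVec, hWU, one_mulVec]
    rw [h] at this
    simpa using this.symm
  · rw [mulVec_mulVec, mulVec_mulVec]
    exact hMv
  · rw [hq, hdot]
    rw [show (C *ᵥ v) ⬝ᵥ (C *ᵥ v) = ∑ i, ((C *ᵥ v) i)^2 from by simp [dotProduct, sq],
      Finset.mul_sum]
    apply Finset.sum_le_sum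
    intro i _
    by_cases hyi : (C *ᵥ v) i = 0
    · simp [hyi]
    · obtain ⟨j, hj⟩ := hsupp i hyi
      subst hj
      have hle : kthLargest hH.eigenvalues (k+1) ≤ hH.eigenvalues (e (ι₂ j)) := by
        rw [hspec (k+1) (by omega) hk]
        exact hmono (Fin.mk_le_mk.mpr (Nat.le_add_right _ _))
      exact mul_le_mul_of_nonneg_right hle (sq_nonneg _)

lemma dotProduct_self_nonneg' {ι : Type*} [Fintype ι] (x : ι → ℝ) : 0 ≤ x ⬝ᵥ x := by
  simpa [dotProduct, ← sq] using Finset.sum_nonneg fun i _ => sq_nonneg (x i)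

lemma dotProduct_self_pos' {ι : Type*} [Fintype ι] {x : ι → ℝ} (hx : x ≠ 0) : 0 < x ⬝ᵥ x :=
  lt_of_le_of_ne (dotProduct_self_nonneg' x)
    (Ne.symm fun h => hx (dotProduct_self_eq_zero.mp h))

lemma qf_le_mu1 {ι : Type*} [Fintype ι] [DecidableEq ι] {H : Matrix ι ι ℝ}
    (hH : H.IsHermitian) (hcard : 1 ≤ Fintype.card ι) (x : ι → ℝ) :
    x ⬝ᵥ (H *ᵥ x) ≤ kthLargest hH.eigenvalues 1 * (x ⬝ᵥ x) := by
  obtain ⟨U, W, hWU, hUW, hdot, hq⟩ := unitary_facts hH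
  obtain ⟨e, hmono, hspec⟩ := kthLargest_spec hH.eigenvalues
  have hx : x = U *ᵥ (W *ᵥ x) := by rw [mulVec_mulVec, hUW, one_mulVec]
  rw [hx, hq, hdot]
  rw [show (W *ᵥ x) ⬝ᵥ (W *ᵥ x) = ∑ i, ((W *ᵥ x) i)^2 from by simp [dotProduct, sq],
    Finset.mul_sum]
  apply Finset.sum_le_sum
  intro i _
  refine mul_le_mul_of_nonneg_right ?_ (sq_nonneg _)
  obtain ⟨j, rfl⟩ := e.surjective i
  rw [hspec 1 le_rfl hcard]
  exact hmono (Fin.le_def.mpr (by show j.val ≤ Fintype.card ι - 1; have := j.isLt; omega))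

lemma qf_ge_min {ι : Type*} [Fintype ι] [DecidableEq ι] {H : Matrix ι ι ℝ}
    (hH : H.IsHermitian) (hcard : 1 ≤ Fintype.card ι) (x : ι → ℝ) :
    kthLargest hH.eigenvalues (Fintype.card ι) * (x ⬝ᵥ x) ≤ x ⬝ᵥ (H *ᵥ x) := by
  obtain ⟨U, W, hWU, hUW, hdot, hq⟩ := unitary_facts hH
  obtain ⟨e, hmono, hspec⟩ := kthLargest_spec hH.eigenvalues
  have hx : x = U *ᵥ (W *ᵥ x) := by rw [mulVec_mulVec, hUW, one_mulVec]
  rw [hx, hq, hdot]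
  rw [show (W *ᵥ x) ⬝ᵥ (W *ᵥ x) = ∑ i, ((W *ᵥ x) i)^2 from by simp [dotProduct, sq],
    Finset.mul_sum]
  apply Finset.sum_le_sum
  intro i _
  refine mul_le_mul_of_nonneg_right ?_ (sq_nonneg _)
  obtain ⟨j, rfl⟩ := e.surjective i
  rw [hspec (Fintype.card ι) hcard le_rfl]
  exact hmono (Fin.le_def.mpr (by show Fintype.card ι - Fintype.card ι ≤ j.val; omega))

lemma sum_eigenvalues_eq_trace' {ι : Type*} [Fintype ι] [DecidableEq ι] {H : Matrix ι ι ℝ}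
    (hH : H.IsHermitian) :
    ∑ i, hH.eigenvalues i = H.trace := by
  conv_rhs => rw [hH.spectral_theorem, Unitary.conjStarAlgAut_apply]
  rw [Matrix.trace_mul_comm, ← Matrix.mul_assoc,
    (Matrix.mem_unitaryGroup_iff').mp hH.eigenvectorUnitary.2, Matrix.one_mul]
  simp [Matrix.trace, Matrix.diag, RCLike.ofReal_real_eq_id]

lemma mu1_le_trace {ι : Type*} [Fintype ι] [DecidableEq ι] {H : Matrix ι ι ℝ}
    (hH : H.IsHermitian) (hcard : 1 ≤ Fintype.card ι) (hpos : ∀ i, 0 ≤ hH.eigenvalues i) :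
    kthLargest hH.eigenvalues 1 ≤ H.trace := by
  obtain ⟨e, hmono, hspec⟩ := kthLargest_spec hH.eigenvalues
  rw [hspec 1 le_rfl hcard, ← sum_eigenvalues_eq_trace' hH]
  exact Finset.single_le_sum (fun i _ => hpos i) (Finset.mem_univ _)

lemma cf_low {ι κ : Type*} [Fintype ι] [DecidableEq ι] [Fintype κ] {H : Matrix ι ι ℝ}
    (hH : H.IsHermitian) (k : ℕ) (hk : k + 1 ≤ Fintype.card ι) (hκ : Fintype.card κ = k + 1)
    (C : Matrix ι κ ℝ) (hC : ∀ v, C *ᵥ v = 0 → v = 0) (c : ℝ)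
    (hQ : ∀ v : κ → ℝ, c * ((C *ᵥ v) ⬝ᵥ (C *ᵥ v)) ≤ (C *ᵥ v) ⬝ᵥ (H *ᵥ (C *ᵥ v))) :
    c ≤ kthLargest hH.eigenvalues (k + 1) := by
  classical
  obtain ⟨U, W, hWU, hUW, hdot, hq⟩ := unitary_facts hH
  obtain ⟨e, hmono, hspec⟩ := kthLargest_spec hH.eigenvalues
  let M : Matrix (Fin k) κ ℝ :=
    Matrix.of fun t j => (W * C) (e ⟨Fintype.card ι - k + t.val, by have := t.isLt; omega⟩) j
  have hrank : M.rank < Fintype.card κ := by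
    have := M.rank_le_card_height
    simp only [Fintype.card_fin] at this
    omega
  obtain ⟨v, hv0, hMv⟩ := exists_ne_zero_mulVec_eq_zero M hrank
  have hx0 : C *ᵥ v ≠ 0 := fun h => hv0 (hC v h)
  have hyWC : W *ᵥ (C *ᵥ v) = (W * C) *ᵥ v := by rw [mulVec_mulVec]
  have hxy : C *ᵥ v = U *ᵥ (W *ᵥ (C *ᵥ v)) := by rw [mulVec_mulVec, hUW, one_mulVec]
  have hytop : ∀ i : Fin (Fintype.card ι), Fintype.card ι - k ≤ i.val →
      (W *ᵥ (C *ᵥ v)) (e i) = 0 := by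
    intro i hi
    have hlt : i.val - (Fintype.card ι - k) < k := by have := i.isLt; omega
    have hidx : e (⟨Fintype.card ι - k +
        ((⟨i.val - (Fintype.card ι - k), hlt⟩ : Fin k)).val, by have := hlt; omega⟩ :
        Fin (Fintype.card ι)) = e i := by
      apply congrArg e
      apply Fin.ext
      show Fintype.card ι - k + (i.val - (Fintype.card ι - k)) = i.val
      omega
    have h2 : (W *ᵥ (C *ᵥ v)) (e i) = (M *ᵥ v) ⟨i.val - (Fintype.card ι - k), hlt⟩ := by
      rw [hyWC]
      simp only [mulVec, dotProduct, M, Matrix.of_apply]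
      rw [hidx]
    rw [h2, hMv]
    rfl
  have hpos : 0 < (C *ᵥ v) ⬝ᵥ (C *ᵥ v) := dotProduct_self_pos' hx0
  have hub : (C *ᵥ v) ⬝ᵥ (H *ᵥ (C *ᵥ v)) ≤
      kthLargest hH.eigenvalues (k+1) * ((C *ᵥ v) ⬝ᵥ (C *ᵥ v)) := by
    conv_lhs => rw [hxy]
    conv_rhs => rw [hxy]
    rw [hq, hdot]
    rw [show (W *ᵥ (C *ᵥ v)) ⬝ᵥ (W *ᵥ (C *ᵥ v)) = ∑ i, ((W *ᵥ (C *ᵥ v)) i)^2 from by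
      simp [dotProduct, sq], Finset.mul_sum]
    apply Finset.sum_le_sum
    intro i _
    by_cases hyi : (W *ᵥ (C *ᵥ v)) i = 0
    · simp [hyi]
    · refine mul_le_mul_of_nonneg_right ?_ (sq_nonneg _)
      obtain ⟨j, rfl⟩ := e.surjective i
      have hjv : j.val < Fintype.card ι - k := by
        by_contra hge
        push_neg at hge
        exact hyi (hytop j hge)
      rw [hspec (k+1) (by omega) hk]
      exact hmono (Fin.le_def.mpr (by show j.val ≤ Fintype.card ι - (k+1); omega))
  have hcomb := (hQ v).trans hub
  exact le_of_mul_le_mul_right hcomb hpos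

lemma qf_conj {m n : Type*} [Fintype m] [Fintype n] (A : Matrix m n ℝ) (x : n → ℝ) :
    x ⬝ᵥ ((Aᴴ * A) *ᵥ x) = (A *ᵥ x) ⬝ᵥ (A *ᵥ x) := by
  rw [← mulVec_mulVec, dotProduct_mulVec, Matrix.conjTranspose_eq_transpose_of_trivial,
    vecMul_transpose]

lemma kthLargest_sv_nonneg {m n : Type*} [Fintype m] [Fintype n] [DecidableEq n]
    (A : Matrix m n ℝ) (j : ℕ) (h1 : 1 ≤ j) (h2 : j ≤ Fintype.card n) :
    0 ≤ kthLargest (Matrix.isHermitian_conjTranspose_mul_self A).eigenvalues j := by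
  obtain ⟨e, _, hspec⟩ := kthLargest_spec (Matrix.isHermitian_conjTranspose_mul_self A).eigenvalues
  rw [hspec j h1 h2]
  exact (Matrix.posSemidef_conjTranspose_mul_self A).eigenvalues_nonneg _

lemma inv_norm_bound {ι : Type*} [Fintype ι] [DecidableEq ι] {N G : Matrix ι ι ℝ} (hGN : G * N = 1)
    {β : ℝ} (hβ : 0 ≤ β) (hG : ∀ i j, |G i j| ≤ β) (x : ι → ℝ) :
    x ⬝ᵥ x ≤ ((Fintype.card ι : ℝ) * β)^2 * ((N *ᵥ x) ⬝ᵥ (N *ᵥ x)) := by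
  classical
  have hx : x = G *ᵥ (N *ᵥ x) := by rw [mulVec_mulVec, hGN, one_mulVec]
  set w := N *ᵥ x with hw
  have hper : ∀ i, ((G *ᵥ w) i)^2 ≤ β^2 * ((Fintype.card ι : ℝ) * ∑ l, (w l)^2) := by
    intro i
    have h1 : |(G *ᵥ w) i| ≤ β * ∑ l, |w l| := by
      calc |(G *ᵥ w) i| = |∑ l, G i l * w l| := rfl
        _ ≤ ∑ l, |G i l * w l| := Finset.abs_sum_le_sum_abs _ _
        _ ≤ ∑ l, β * |w l| := Finset.sum_le_sum fun l _ => by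
            rw [abs_mul]
            exact mul_le_mul_of_nonneg_right (hG i l) (abs_nonneg _)
        _ = β * ∑ l, |w l| := by rw [Finset.mul_sum]
    have h2 : ((G *ᵥ w) i)^2 ≤ (β * ∑ l, |w l|)^2 := by
      rw [← sq_abs]
      exact pow_le_pow_left₀ (abs_nonneg _) h1 2
    refine h2.trans ?_
    rw [mul_pow]
    refine mul_le_mul_of_nonneg_left ?_ (sq_nonneg β)
    calc (∑ l, |w l|)^2 ≤ (Finset.univ.card : ℝ) * ∑ l, |w l|^2 :=
          sq_sum_le_card_mul_sum_sq
      _ = (Fintype.card ι : ℝ) * ∑ l, (w l)^2 := by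
          simp [sq_abs, Finset.card_univ]
  have hsum : x ⬝ᵥ x = ∑ i, ((G *ᵥ w) i)^2 := by
    conv_lhs => rw [hx]
    simp [dotProduct, sq]
  rw [hsum]
  have hws : (N *ᵥ x) ⬝ᵥ (N *ᵥ x) = ∑ l, (w l)^2 := by simp [← hw, dotProduct, sq]
  rw [hws]
  calc ∑ i, ((G *ᵥ w) i)^2 ≤ ∑ _i : ι, β^2 * ((Fintype.card ι : ℝ) * ∑ l, (w l)^2) :=
        Finset.sum_le_sum fun i _ => hper i
    _ = (Fintype.card ι : ℝ) * (β^2 * ((Fintype.card ι : ℝ) * ∑ l, (w l)^2)) := by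
        simp [Finset.sum_const, Finset.card_univ, nsmul_eq_mul]
    _ = ((Fintype.card ι : ℝ) * β)^2 * ∑ l, (w l)^2 := by ring

lemma adjugate_abs_eq {d : ℕ} (B : Matrix (Fin (d+1)) (Fin (d+1)) ℝ) (i j : Fin (d+1)) :
    |B.adjugate i j| = |(B.submatrix j.succAbove i.succAbove).det| := by
  rw [Matrix.adjugate_apply, Matrix.det_succ_row _ j]
  rw [Finset.sum_eq_single i]
  · have hrow : (B.updateRow j (Pi.single i 1)) j i = 1 := by
      rw [Matrix.updateRow_self]
      simp
    have hminor : (B.updateRow j (Pi.single i 1)).submatrix j.succAbove i.succAbove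
        = B.submatrix j.succAbove i.succAbove := by
      ext a b
      simp only [Matrix.submatrix_apply]
      exact congrFun (Matrix.updateRow_ne (Fin.succAbove_ne j a)) (i.succAbove b)
    rw [hrow, hminor, mul_one, abs_mul, abs_pow, abs_neg, abs_one, one_pow, one_mul]
  · intro b _ hb
    have : (B.updateRow j (Pi.single i 1)) j b = 0 := by
      rw [Matrix.updateRow_self]
      exact Pi.single_eq_of_ne hb 1
    rw [this]
    ring
  · simp

set_option maxHeartbeats 1000000 in
lemma entry_bound {k m₂ n₂ : ℕ} (hm : 0 < m₂) (hn : 0 < n₂)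
    (A₁₁ : Matrix (Fin k) (Fin k) ℝ) (A₁₂ : Matrix (Fin k) (Fin n₂) ℝ)
    (A₂₁ : Matrix (Fin m₂) (Fin k) ℝ) (A₂₂ : Matrix (Fin m₂) (Fin n₂) ℝ)
    (hA : IsUnit A₁₁.det) (ρ : ℝ) (hρ : 1 ≤ ρ)
    (hloc : ∀ (p : Fin m₂) (q : Fin n₂) (r c : Fin k → Fin k ⊕ Unit),
      Function.Injective r → Function.Injective c →
      |((Matrix.fromBlocks A₁₁ (Matrix.of fun i (_ : Unit) => A₁₂ i q)
          (Matrix.of fun (_ : Unit) j => A₂₁ p j)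
          (Matrix.of fun (_ : Unit) (_ : Unit) => A₂₂ p q)).submatrix r c).det|
        ≤ ρ * |A₁₁.det|) (p : Fin m₂) (q : Fin n₂) :
    |(A₂₂ - A₂₁ * A₁₁⁻¹ * A₁₂) p q| ≤
      ρ * (k + 1) * singularValue (Matrix.fromBlocks A₁₁ A₁₂ A₂₁ A₂₂) (k + 1) := by
  classical
  have hρ0 : (0:ℝ) < ρ := lt_of_lt_of_le one_pos hρ
  have hσ0 : 0 ≤ singularValue (Matrix.fromBlocks A₁₁ A₁₂ A₂₁ A₂₂) (k + 1) :=
    Real.sqrt_nonneg _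
  set Ahat : Matrix (Fin k ⊕ Unit) (Fin k ⊕ Unit) ℝ :=
    Matrix.fromBlocks A₁₁ (Matrix.of fun i (_ : Unit) => A₁₂ i q)
      (Matrix.of fun (_ : Unit) j => A₂₁ p j)
      (Matrix.of fun (_ : Unit) (_ : Unit) => A₂₂ p q) with hAhatdef
  haveI : Invertible A₁₁ := A₁₁.invertibleOfIsUnitDet hA
  have hd11 : A₁₁.det ≠ 0 := hA.ne_zero
  have hdet : Ahat.det = A₁₁.det * (A₂₂ - A₂₁ * A₁₁⁻¹ * A₁₂) p q := by
    rw [hAhatdef, Matrix.det_fromBlocks₁₁]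
    congr 1
    rw [Matrix.det_unique, Matrix.invOf_eq_nonsing_inv]
    simp [Matrix.sub_apply, Matrix.mul_apply]
  by_cases h0 : (A₂₂ - A₂₁ * A₁₁⁻¹ * A₁₂) p q = 0
  · rw [h0, abs_zero]; positivity
  have hdet0 : Ahat.det ≠ 0 := by rw [hdet]; exact mul_ne_zero hd11 h0
  have hAhatu : IsUnit Ahat.det := Ne.isUnit hdet0
  set β : ℝ := ρ * |A₁₁.det| / |Ahat.det| with hβdef
  have habsd : 0 < |Ahat.det| := abs_pos.mpr hdet0
  have habs1 : 0 < |A₁₁.det| := abs_pos.mpr hd11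
  have hβpos : 0 < β := div_pos (mul_pos hρ0 habs1) habsd
  let ee : Fin (k + 1) ≃ (Fin k ⊕ Unit) :=
    finSumFinEquiv.symm.trans (Equiv.sumCongr (Equiv.refl (Fin k)) (Equiv.ofUnique (Fin 1) Unit))
  have hadj : ∀ a b, |Ahat.adjugate a b| ≤ ρ * |A₁₁.det| := by
    intro a b
    have h1 : Ahat.adjugate a b = (Ahat.submatrix ee ee).adjugate (ee.symm a) (ee.symm b) := by
      rw [Matrix.adjugate_submatrix_equiv_self]
      simp [Matrix.submatrix_apply]
    rw [h1, adjugate_abs_eq, Matrix.submatrix_submatrix]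
    exact hloc p q _ _ (ee.injective.comp Fin.succAbove_right_injective)
      (ee.injective.comp Fin.succAbove_right_injective)
  have hinvAhat : ∀ a b, |Ahat⁻¹ a b| ≤ β := by
    intro a b
    rw [Matrix.inv_def, Ring.inverse_eq_inv]
    have hsm : (Ahat.det⁻¹ • Ahat.adjugate) a b = Ahat.det⁻¹ * Ahat.adjugate a b := rfl
    rw [hsm, abs_mul, abs_inv, hβdef, div_eq_mul_inv, mul_comm (ρ * |A₁₁.det|) _]
    exact mul_le_mul_of_nonneg_left (hadj a b) (by positivity)
  have hGN : Ahat⁻¹ * Ahat = 1 := Matrix.nonsing_inv_mul _ hAhatu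
  have hcardι' : Fintype.card (Fin k ⊕ Unit) = k + 1 := by simp
  have hnorm : ∀ x : (Fin k ⊕ Unit) → ℝ,
      x ⬝ᵥ x ≤ (((k : ℝ) + 1) * β)^2 * ((Ahat *ᵥ x) ⬝ᵥ (Ahat *ᵥ x)) := by
    intro x
    have := inv_norm_bound hGN hβpos.le hinvAhat x
    rwa [show ((Fintype.card (Fin k ⊕ Unit) : ℝ)) = (k : ℝ) + 1 by rw [hcardι']; push_cast; ring]
      at this
  set γ := (((k : ℝ) + 1) * β)^2 with hγdef
  have hγpos : 0 < γ := by positivity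
  have hmu1 : γ⁻¹ ≤ kthLargest (Matrix.isHermitian_conjTranspose_mul_self Ahat).eigenvalues (k + 1) := by
    refine cf_low (Matrix.isHermitian_conjTranspose_mul_self Ahat) k (le_of_eq hcardι'.symm) hcardι'
      (1 : Matrix (Fin k ⊕ Unit) (Fin k ⊕ Unit) ℝ) (fun v hv => by rwa [one_mulVec] at hv)
      γ⁻¹ ?_
    intro v
    simp only [one_mulVec]
    rw [qf_conj]
    calc γ⁻¹ * (v ⬝ᵥ v) ≤ γ⁻¹ * (γ * ((Ahat *ᵥ v) ⬝ᵥ (Ahat *ᵥ v))) :=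
          mul_le_mul_of_nonneg_left (hnorm v) (inv_nonneg.mpr hγpos.le)
      _ = (Ahat *ᵥ v) ⬝ᵥ (Ahat *ᵥ v) := by field_simp
  set Af := Matrix.fromBlocks A₁₁ A₁₂ A₂₁ A₂₂ with hAfdef
  let cmap : (Fin k ⊕ Unit) → (Fin k ⊕ Fin n₂) :=
    Sum.elim (fun j => Sum.inl j) (fun _ => Sum.inr q)
  let rmap : (Fin k ⊕ Unit) → (Fin k ⊕ Fin m₂) :=
    Sum.elim (fun j => Sum.inl j) (fun _ => Sum.inr p)
  have hcmapinj : Function.Injective cmap := by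
    intro a b hab
    cases a with
    | inl i => cases b with
      | inl i' => simp only [cmap, Sum.elim_inl, Sum.inl.injEq] at hab; rw [hab]
      | inr u => simp [cmap] at hab
    | inr u => cases b with
      | inl i' => simp [cmap] at hab
      | inr u' => exact congrArg Sum.inr (Subsingleton.elim u u')
  have hrmapinj : Function.Injective rmap := by
    intro a b hab
    cases a with
    | inl i => cases b with
      | inl i' => simp only [rmap, Sum.elim_inl, Sum.inl.injEq] at hab; rw [hab]
      | inr u => simp [rmap] at hab
    | inr u => cases b with
      | inl i' => simp [rmap] at hab
      | inr u' => exact congrArg Sum.inr (Subsingleton.elim u u')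
  let Cm : Matrix (Fin k ⊕ Fin n₂) (Fin k ⊕ Unit) ℝ :=
    Matrix.of fun a b => if a = cmap b then 1 else 0
  have hAhatAf : ∀ i b, Ahat i b = Af (rmap i) (cmap b) := by
    intro i b
    cases i <;> cases b <;> rfl
  have hCv : ∀ (v : (Fin k ⊕ Unit) → ℝ) (a : Fin k ⊕ Fin n₂),
      (Cm *ᵥ v) a = ∑ b, (if a = cmap b then v b else 0) := by
    intro v a
    simp [Cm, mulVec, dotProduct, ite_mul, one_mul, zero_mul]
  have hCval : ∀ v b, (Cm *ᵥ v) (cmap b) = v b := by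
    intro v b
    rw [hCv, Finset.sum_eq_single b]
    · simp
    · intro b' _ hb'
      exact if_neg fun h => hb' (hcmapinj h).symm
    · simp
  have hCsupp : ∀ v a, (∀ b, a ≠ cmap b) → (Cm *ᵥ v) a = 0 := by
    intro v a ha
    rw [hCv]
    exact Finset.sum_eq_zero fun b _ => if_neg (ha b)
  have hCinj : ∀ v, Cm *ᵥ v = 0 → v = 0 := by
    intro v hv
    funext b
    have := hCval v b
    rw [hv] at this
    simpa using this.symm
  have hsum_img : ∀ g : (Fin k ⊕ Fin n₂) → ℝ, (∀ a, (∀ b, a ≠ cmap b) → g a = 0) →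
      ∑ a, g a = ∑ b, g (cmap b) := by
    intro g hg
    have h1 : ∑ a ∈ Finset.univ.image cmap, g a = ∑ b : Fin k ⊕ Unit, g (cmap b) :=
      Finset.sum_image (fun x _ y _ h => hcmapinj h)
    rw [← h1]
    refine (Finset.sum_subset (Finset.subset_univ _) ?_).symm
    intro a _ ha
    refine hg a fun b hb => ha (Finset.mem_image.mpr ⟨b, Finset.mem_univ b, hb.symm⟩)
  have hdot1 : ∀ v, (Cm *ᵥ v) ⬝ᵥ (Cm *ᵥ v) = v ⬝ᵥ v := by
    intro v
    have := hsum_img (fun a => ((Cm *ᵥ v) a) * ((Cm *ᵥ v) a))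
      (fun a ha => by rw [hCsupp v a ha]; ring)
    simpa [dotProduct, hCval] using this
  have hAfC : ∀ (v : (Fin k ⊕ Unit) → ℝ) (r : Fin k ⊕ Fin m₂),
      (Af *ᵥ (Cm *ᵥ v)) r = ∑ b, Af r (cmap b) * v b := by
    intro v r
    show ∑ a, Af r a * (Cm *ᵥ v) a = _
    calc ∑ a, Af r a * (Cm *ᵥ v) a
        = ∑ a, ∑ b, (if a = cmap b then Af r a * v b else 0) := by
          refine Finset.sum_congr rfl fun a _ => ?_
          rw [hCv, Finset.mul_sum]
          refine Finset.sum_congr rfl fun b _ => ?_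
          split <;> simp
      _ = ∑ b, ∑ a, (if a = cmap b then Af r a * v b else 0) := Finset.sum_comm
      _ = ∑ b, Af r (cmap b) * v b := by
          refine Finset.sum_congr rfl fun b _ => ?_
          simp [Finset.sum_ite_eq']
  have hAfCr : ∀ v i, (Af *ᵥ (Cm *ᵥ v)) (rmap i) = (Ahat *ᵥ v) i := by
    intro v i
    rw [hAfC]
    exact (Finset.sum_congr rfl fun b _ => by show Ahat i b * v b = _; rw [hAhatAf]).symm
  have hmu2 : kthLargest (Matrix.isHermitian_conjTranspose_mul_self Ahat).eigenvalues (k + 1)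
      ≤ kthLargest (Matrix.isHermitian_conjTranspose_mul_self Af).eigenvalues (k + 1) := by
    refine cf_low (Matrix.isHermitian_conjTranspose_mul_self Af) k ?_ hcardι' Cm hCinj _ ?_
    · simp only [Fintype.card_sum, Fintype.card_fin]
      omega
    · intro v
      rw [qf_conj, hdot1]
      have hstep2 : kthLargest (Matrix.isHermitian_conjTranspose_mul_self Ahat).eigenvalues (k + 1)
          * (v ⬝ᵥ v) ≤ (Ahat *ᵥ v) ⬝ᵥ (Ahat *ᵥ v) := by
        have h := qf_ge_min (Matrix.isHermitian_conjTranspose_mul_self Ahat)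
          (by rw [hcardι']; omega) v
        rw [hcardι', qf_conj] at h
        exact h
      refine hstep2.trans ?_
      have himg : ∑ i : Fin k ⊕ Unit, ((Af *ᵥ (Cm *ᵥ v)) (rmap i))^2
          ≤ ∑ r, ((Af *ᵥ (Cm *ᵥ v)) r)^2 := by
        have h1 : ∑ r ∈ Finset.univ.image rmap, ((Af *ᵥ (Cm *ᵥ v)) r)^2
            = ∑ i : Fin k ⊕ Unit, ((Af *ᵥ (Cm *ᵥ v)) (rmap i))^2 :=
          Finset.sum_image (fun x _ y _ h => hrmapinj h)
        rw [← h1]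
        exact Finset.sum_le_sum_of_subset_of_nonneg (Finset.subset_univ _)
          (fun r _ _ => sq_nonneg _)
      calc (Ahat *ᵥ v) ⬝ᵥ (Ahat *ᵥ v) = ∑ i, ((Ahat *ᵥ v) i)^2 := by simp [dotProduct, sq]
        _ = ∑ i, ((Af *ᵥ (Cm *ᵥ v)) (rmap i))^2 :=
            Finset.sum_congr rfl fun i _ => by rw [hAfCr]
        _ ≤ ∑ r, ((Af *ᵥ (Cm *ᵥ v)) r)^2 := himg
        _ = (Af *ᵥ (Cm *ᵥ v)) ⬝ᵥ (Af *ᵥ (Cm *ᵥ v)) := by simp [dotProduct, sq]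
  have hfin : γ⁻¹ ≤ kthLargest (Matrix.isHermitian_conjTranspose_mul_self Af).eigenvalues (k + 1) :=
    hmu1.trans hmu2
  have hsq : (((k : ℝ) + 1) * β)⁻¹ ≤ singularValue Af (k + 1) := by
    have h := Real.sqrt_le_sqrt hfin
    rwa [hγdef, Real.sqrt_inv, Real.sqrt_sq (by positivity)] at h
  have hk1 : ((k : ℝ) + 1) ≠ 0 := by positivity
  have hSabs : |(A₂₂ - A₂₁ * A₁₁⁻¹ * A₁₂) p q| = |Ahat.det| / |A₁₁.det| := by
    rw [hdet, abs_mul]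
    field_simp
  have h2 : ρ * ((k : ℝ) + 1) * ((((k : ℝ) + 1)) * β)⁻¹ = |Ahat.det| / |A₁₁.det| := by
    rw [hβdef]
    field_simp
  rw [hSabs, ← h2]
  exact mul_le_mul_of_nonneg_left hsq (by positivity)


set_option maxHeartbeats 1000000 in
/-- Let `A = [[A₁₁, A₁₂], [A₂₁, A₂₂]]` be an `m × n` real matrix with `A₁₁` a nonsingular
`k × k` block, `k < min(m,n)`, having local `ρ`-maximum volume in `A` for some `ρ ≥ 1`.
Then `σ_{k+1}(A) ≤ ‖A/A₁₁‖₂ ≤ ρ (k+1) √((m−k)(n−k)) σ_{k+1}(A)`, where `‖·‖₂` is the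
spectral norm (the largest singular value). -/
theorem schur_spectral_bounds_of_local_maxvol {k m₂ n₂ : ℕ} (hm : 0 < m₂) (hn : 0 < n₂)

    (A₁₁ : Matrix (Fin k) (Fin k) ℝ) (A₁₂ : Matrix (Fin k) (Fin n₂) ℝ)
    (A₂₁ : Matrix (Fin m₂) (Fin k) ℝ) (A₂₂ : Matrix (Fin m₂) (Fin n₂) ℝ)
    (hA : IsUnit A₁₁.det) (ρ : ℝ) (hρ : 1 ≤ ρ)
    (hloc : ∀ (p : Fin m₂) (q : Fin n₂) (r c : Fin k → Fin k ⊕ Unit),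
      Function.Injective r → Function.Injective c →
      |((Matrix.fromBlocks A₁₁ (Matrix.of fun i (_ : Unit) => A₁₂ i q)
          (Matrix.of fun (_ : Unit) j => A₂₁ p j)
          (Matrix.of fun (_ : Unit) (_ : Unit) => A₂₂ p q)).submatrix r c).det|
        ≤ ρ * |A₁₁.det|) :
    singularValue (Matrix.fromBlocks A₁₁ A₁₂ A₂₁ A₂₂) (k + 1) ≤
      singularValue (A₂₂ - A₂₁ * A₁₁⁻¹ * A₁₂) 1 ∧
    singularValue (A₂₂ - A₂₁ * A₁₁⁻¹ * A₁₂) 1 ≤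
      ρ * (k + 1) * Real.sqrt ((m₂ : ℝ) * (n₂ : ℝ)) *
        singularValue (Matrix.fromBlocks A₁₁ A₁₂ A₂₁ A₂₂) (k + 1) := by
  classical
  have hρ0 : (0:ℝ) < ρ := lt_of_lt_of_le one_pos hρ
  set Af := Matrix.fromBlocks A₁₁ A₁₂ A₂₁ A₂₂ with hAf
  set S := A₂₂ - A₂₁ * A₁₁⁻¹ * A₁₂ with hSdef
  have hcardn : 1 ≤ Fintype.card (Fin n₂) := by simp only [Fintype.card_fin]; omega
  have hcardsum : k + 1 ≤ Fintype.card (Fin k ⊕ Fin n₂) := by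
    simp only [Fintype.card_sum, Fintype.card_fin]
    omega
  constructor
  · -- lower bound
    have hinv : A₁₁⁻¹ * A₁₁ = 1 := Matrix.nonsing_inv_mul _ hA
    set Y : Matrix (Fin k ⊕ Fin m₂) (Fin k) ℝ := Matrix.fromRows 1 (A₂₁ * A₁₁⁻¹) with hY
    set Z : Matrix (Fin k) (Fin k ⊕ Fin n₂) ℝ := Matrix.fromCols A₁₁ A₁₂ with hZ
    set E : Matrix (Fin k ⊕ Fin m₂) (Fin k ⊕ Fin n₂) ℝ := Matrix.fromBlocks 0 0 0 S with hE
    have hdecomp : Af = Y * Z + E := by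
      rw [hY, hZ, hE, Matrix.fromRows_mul, Matrix.one_mul, Matrix.mul_fromCols,
        Matrix.fromRows_fromCols_eq_fromBlocks, Matrix.fromBlocks_add, add_zero, add_zero,
        add_zero, Matrix.mul_assoc, hinv, Matrix.mul_one, hSdef, hAf]
      congr 1
      rw [add_comm, sub_add_cancel]
    have hXrank : (Y * Z).rank ≤ k :=
      le_trans (Matrix.rank_mul_le_right Y Z) (by simpa using Z.rank_le_card_height)
    obtain ⟨x, hx0, hXx, hlow⟩ :=
      cf_up (Matrix.isHermitian_conjTranspose_mul_self Af) k hcardsum (Y * Z) hXrank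
    have hAx : Af *ᵥ x = E *ᵥ x := by
      rw [hdecomp, Matrix.add_mulVec, hXx, zero_add]
    have hqAf : x ⬝ᵥ ((Afᴴ * Af) *ᵥ x) = (E *ᵥ x) ⬝ᵥ (E *ᵥ x) := by rw [qf_conj, hAx]
    set x2 : Fin n₂ → ℝ := fun q => x (Sum.inr q) with hx2
    have hEx : ∀ a, (E *ᵥ x) a
        = Sum.elim (fun _ : Fin k => (0:ℝ)) (fun p' => (S *ᵥ x2) p') a := by
      intro a
      cases a with
      | inl i =>
        simp [hE, mulVec, dotProduct, Fintype.sum_sum_type]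
      | inr p' =>
        simp [hE, mulVec, dotProduct, Fintype.sum_sum_type, hx2]
    have hEdot : (E *ᵥ x) ⬝ᵥ (E *ᵥ x) = (S *ᵥ x2) ⬝ᵥ (S *ᵥ x2) := by
      simp only [dotProduct, hEx, Fintype.sum_sum_type, Sum.elim_inl, Sum.elim_inr]
      simp
    have hmu1 : (S *ᵥ x2) ⬝ᵥ (S *ᵥ x2) ≤
        kthLargest (Matrix.isHermitian_conjTranspose_mul_self S).eigenvalues 1 * (x2 ⬝ᵥ x2) := by
      have h := qf_le_mu1 (Matrix.isHermitian_conjTranspose_mul_self S) hcardn x2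
      rwa [qf_conj] at h
    have hmu1nn : 0 ≤ kthLargest (Matrix.isHermitian_conjTranspose_mul_self S).eigenvalues 1 :=
      kthLargest_sv_nonneg S 1 le_rfl hcardn
    have hx2x : x2 ⬝ᵥ x2 ≤ x ⬝ᵥ x := by
      simp only [dotProduct, Fintype.sum_sum_type]
      have h1 : (0:ℝ) ≤ ∑ i : Fin k, x (Sum.inl i) * x (Sum.inl i) :=
        Finset.sum_nonneg fun i _ => mul_self_nonneg _
      have h2 : ∑ q, x2 q * x2 q = ∑ q : Fin n₂, x (Sum.inr q) * x (Sum.inr q) := rfl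
      linarith
    have hxpos : 0 < x ⬝ᵥ x := dotProduct_self_pos' hx0
    have hchain : kthLargest (Matrix.isHermitian_conjTranspose_mul_self Af).eigenvalues (k+1)
        * (x ⬝ᵥ x)
        ≤ kthLargest (Matrix.isHermitian_conjTranspose_mul_self S).eigenvalues 1 * (x ⬝ᵥ x) := by
      calc kthLargest (Matrix.isHermitian_conjTranspose_mul_self Af).eigenvalues (k+1) * (x ⬝ᵥ x)
          ≤ x ⬝ᵥ ((Afᴴ * Af) *ᵥ x) := hlow
        _ = (S *ᵥ x2) ⬝ᵥ (S *ᵥ x2) := by rw [hqAf, hEdot]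
        _ ≤ kthLargest (Matrix.isHermitian_conjTranspose_mul_self S).eigenvalues 1 * (x2 ⬝ᵥ x2) :=
            hmu1
        _ ≤ kthLargest (Matrix.isHermitian_conjTranspose_mul_self S).eigenvalues 1 * (x ⬝ᵥ x) :=
            mul_le_mul_of_nonneg_left hx2x hmu1nn
    exact Real.sqrt_le_sqrt (le_of_mul_le_mul_right hchain hxpos)
  · -- upper bound
    have hkey : ∀ p q, |S p q| ≤ ρ * ((k:ℝ) + 1) * singularValue Af (k+1) := fun p q =>
      entry_bound hm hn A₁₁ A₁₂ A₂₁ A₂₂ hA ρ hρ hloc p q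
    set B := ρ * ((k:ℝ) + 1) * singularValue Af (k+1) with hB
    have hB0 : 0 ≤ B :=
      mul_nonneg (mul_nonneg hρ0.le (by positivity)) (Real.sqrt_nonneg _)
    have htr : kthLargest (Matrix.isHermitian_conjTranspose_mul_self S).eigenvalues 1
        ≤ (Sᴴ * S).trace :=
      mu1_le_trace _ hcardn fun i =>
        (Matrix.posSemidef_conjTranspose_mul_self S).eigenvalues_nonneg i
    have htrval : (Sᴴ * S).trace = ∑ q, ∑ p, (S p q)^2 := by
      simp [Matrix.trace, Matrix.diag, Matrix.mul_apply, Matrix.conjTranspose_apply, sq]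
    have htrb : (Sᴴ * S).trace ≤ (m₂ : ℝ) * (n₂ : ℝ) * B^2 := by
      rw [htrval]
      calc ∑ q, ∑ p, (S p q)^2 ≤ ∑ _q : Fin n₂, ∑ _p : Fin m₂, B^2 := by
            refine Finset.sum_le_sum fun q _ => Finset.sum_le_sum fun p _ => ?_
            rw [← sq_abs]
            exact pow_le_pow_left₀ (abs_nonneg _) (hkey p q) 2
        _ = (n₂ : ℝ) * ((m₂ : ℝ) * B^2) := by
            simp [Finset.sum_const, Finset.card_univ, nsmul_eq_mul]
        _ = (m₂ : ℝ) * (n₂ : ℝ) * B^2 := by ring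
    have hμ : kthLargest (Matrix.isHermitian_conjTranspose_mul_self S).eigenvalues 1
        ≤ (m₂ : ℝ) * (n₂ : ℝ) * B^2 := htr.trans htrb
    have hs := Real.sqrt_le_sqrt hμ
    have hrt : Real.sqrt ((m₂ : ℝ) * (n₂ : ℝ) * B^2) = Real.sqrt ((m₂ : ℝ) * (n₂ : ℝ)) * B := by
      rw [Real.sqrt_mul (by positivity), Real.sqrt_sq hB0]
    rw [hrt] at hs
    calc singularValue S 1 ≤ Real.sqrt ((m₂ : ℝ) * (n₂ : ℝ)) * B := hs
      _ = ρ * ((k:ℝ) + 1) * Real.sqrt ((m₂ : ℝ) * (n₂ : ℝ)) * singularValue Af (k+1) := by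
          rw [hB]; ring
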